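/- Let q ≥ 2 be the alphabet size and R(n) the number of rich words of length n over the alphabet. Suppose τ : ℕ → ℕ is a function such that every rich word w of length n has UPS-factorization length LUF(w) ≤ τ(n). Then for all n ≥ 2, R(n) ≤ ∑_{p=1}^{τ(n)} ∑_{n₁+⋯+n_p=n, n_i ≥ 1} R(⌈n₁/2⌉)·R(⌈n₂/2⌉)⋯R(⌈n_p/2⌉). -/

import Mathlib

/-- The set of palindromic factors of a word `w` (including the empty word). -/
def palFactors {α : Type*} [DecidableEq α] (w : List α) : Finset (List α) :=
  ((w.inits.flatMap List.tails).filter fun u => u.reverse = u).toFinset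

/-- A word is rich if it has `|w| + 1` distinct palindromic factors
(including the empty word). -/
def Rich {α : Type*} [DecidableEq α] (w : List α) : Prop :=
  (palFactors w).card = w.length + 1

/-- `s` is the longest palindromic suffix of `u`: a nonempty palindromic suffix of
maximal length. -/
def IsLPS {α : Type*} (u s : List α) : Prop :=
  s ≠ [] ∧ s.reverse = s ∧ s <:+ u ∧
    ∀ t : List α, t <:+ u → t.reverse = t → t.length ≤ s.length

/-- `ws = [w_p, …, w_1]` is a UPS-factorization of `w`: distinct nonempty
palindromes whose concatenation is `w`, where each `w_i` is the longest palindromic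
suffix of `w_p ⋯ w_i`. -/
def UPS {α : Type*} (w : List α) (ws : List (List α)) : Prop :=
  ws ≠ [] ∧ ws.flatten = w ∧ ws.Pairwise (· ≠ ·) ∧
    ∀ i : Fin ws.length, IsLPS ((ws.take (i + 1)).flatten) ws[i]

instance {α : Type*} [DecidableEq α] (w : List α) : Decidable (Rich w) :=
  decidable_of_iff ((palFactors w).card = w.length + 1) Iff.rfl

/-- The number of rich words of length `n` over an alphabet of size `q`. -/
def richCount (q n : ℕ) : ℕ :=
  Fintype.card {w : List.Vector (Fin q) n // Rich w.toList}

/-- Ordered compositions of `n` into `p` positive parts. -/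
def comps (n p : ℕ) : Finset (Fin p → Fin (n + 1)) :=
  Finset.univ.filter fun f => (∀ i, 1 ≤ (f i : ℕ)) ∧ ∑ i, ((f i : ℕ)) = n

section AuxUPS


variable {α : Type*} [DecidableEq α]

lemma mem_palFactors {u w : List α} :
    u ∈ palFactors w ↔ u <:+: w ∧ u.reverse = u := by
  simp only [palFactors, List.mem_toFinset, List.mem_filter, List.mem_flatMap,
    List.mem_inits, List.mem_tails, decide_eq_true_eq]
  constructor
  · rintro ⟨⟨x, hx, hu⟩, hp⟩
    exact ⟨hu.isInfix.trans hx.isInfix, hp⟩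
  · rintro ⟨⟨s, t, hst⟩, hp⟩
    exact ⟨⟨s ++ u, ⟨t, by simpa using hst⟩, ⟨s, rfl⟩⟩, hp⟩

lemma palFactors_mono {w w' : List α} (h : w' <:+: w) :
    palFactors w' ⊆ palFactors w := fun u hu => by
  rw [mem_palFactors] at hu ⊢
  exact ⟨hu.1.trans h, hu.2⟩

lemma nil_mem_palFactors (w : List α) : [] ∈ palFactors w :=
  mem_palFactors.2 ⟨List.nil_infix, rfl⟩

lemma palFactors_nil : (palFactors ([] : List α)) = {[]} := by
  ext u
  simp only [mem_palFactors, List.infix_nil, Finset.mem_singleton]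
  constructor
  · rintro ⟨rfl, -⟩; rfl
  · rintro rfl; exact ⟨rfl, rfl⟩

/-- A palindromic factor of `w ++ [a]` which is not a factor of `w` is a suffix. -/
lemma new_pal_suffix {w u : List α} {a : α} (hu : u <:+: w ++ [a])
    (hnew : ¬ u <:+: w) : u <:+ w ++ [a] := by
  obtain ⟨s, t, hst⟩ := hu
  rcases t.eq_nil_or_concat with rfl | ⟨t', b, rfl⟩
  · exact ⟨s, by simpa using hst⟩
  · exfalso
    apply hnew
    have hst' : (s ++ u ++ t') ++ [b] = w ++ [a] := by
      simpa [List.append_assoc] using hst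
    have := List.append_inj_left' hst' (by simp)
    exact ⟨s, t', by simpa [List.append_assoc] using this⟩

/-- If `u` is a proper prefix of `v` and `v` is a suffix of `w ++ [a]`, then
`u` is a factor of `w`. -/
lemma prefix_proper_infix {w u v : List α} {a : α} (huv : u <+: v) (hne : u ≠ v)
    (hv : v <:+ w ++ [a]) : u <:+: w := by
  obtain ⟨r, rfl⟩ := huv
  rcases r.eq_nil_or_concat with rfl | ⟨r', b, rfl⟩
  · simp at hne
  · obtain ⟨s, hs⟩ := hv
    have hs' : (s ++ u ++ r') ++ [b] = w ++ [a] := by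
      simpa [List.append_assoc] using hs
    have := List.append_inj_left' hs' (by simp)
    exact ⟨s, r', by simpa [List.append_assoc] using this⟩

/-- Two palindromic factors of `w ++ [a]` that are not factors of `w` coincide. -/
lemma new_pal_unique {w u v : List α} {a : α}
    (hu : u ∈ palFactors (w ++ [a])) (hnu : u ∉ palFactors w)
    (hv : v ∈ palFactors (w ++ [a])) (hnv : v ∉ palFactors w) : u = v := by
  rw [mem_palFactors] at hu hv
  wlog hle : u.length ≤ v.length generalizing u v
  · exact (this hv hnv hu hnu (le_of_not_ge hle)).symm
  have hsu : u <:+ w ++ [a] := new_pal_suffix hu.1 fun h => hnu (mem_palFactors.2 ⟨h, hu.2⟩)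
  have hsv : v <:+ w ++ [a] := new_pal_suffix hv.1 fun h => hnv (mem_palFactors.2 ⟨h, hv.2⟩)
  have huv : u <:+ v := by
    rcases List.suffix_or_suffix_of_suffix hsu hsv with h | h
    · exact h
    · exact (h.eq_of_length (le_antisymm h.length_le hle)).symm ▸
        List.suffix_refl v
  have hpuv : u <+: v := by
    have h := huv.reverse
    rwa [hu.2, hv.2] at h
  by_contra hne
  exact hnu (mem_palFactors.2 ⟨prefix_proper_infix hpuv hne hsv, hu.2⟩)

variable {α : Type*} [DecidableEq α]

lemma card_palFactors_concat (w : List α) (a : α) :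
    (palFactors (w ++ [a])).card ≤ (palFactors w).card + 1 := by
  by_cases h : palFactors (w ++ [a]) ⊆ palFactors w
  · exact (Finset.card_le_card h).trans (Nat.le_succ _)
  · obtain ⟨u, hu, hnu⟩ := Finset.not_subset.1 h
    have hsub : palFactors (w ++ [a]) ⊆ insert u (palFactors w) := by
      intro v hv
      by_cases hnv : v ∈ palFactors w
      · exact Finset.mem_insert_of_mem hnv
      · exact Finset.mem_insert.2 (Or.inl (new_pal_unique hv hnv hu hnu))
    calc (palFactors (w ++ [a])).card ≤ (insert u (palFactors w)).card :=
          Finset.card_le_card hsub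
      _ ≤ (palFactors w).card + 1 := Finset.card_insert_le _ _

lemma card_palFactors_le (w : List α) : (palFactors w).card ≤ w.length + 1 := by
  induction w using List.reverseRecOn with
  | nil => simp [palFactors_nil]
  | append_singleton w a ih =>
    calc (palFactors (w ++ [a])).card ≤ (palFactors w).card + 1 :=
          card_palFactors_concat w a
      _ ≤ w.length + 1 + 1 := by omega
      _ = (w ++ [a]).length + 1 := by simp

lemma Rich.dropLast {w : List α} {a : α} (h : Rich (w ++ [a])) : Rich w := by
  have h1 := card_palFactors_concat w a
  have h2 := card_palFactors_le w
  unfold Rich at *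
  simp only [List.length_append, List.length_singleton] at h
  omega

lemma Rich.prefix {w u : List α} (h : Rich w) (hp : u <+: w) : Rich u := by
  obtain ⟨t, rfl⟩ := hp
  induction t using List.reverseRecOn with
  | nil => simpa using h
  | append_singleton t a ih =>
    rw [← List.append_assoc] at h
    exact ih h.dropLast

lemma palFactors_reverse (w : List α) : palFactors w.reverse = palFactors w := by
  ext u
  simp only [mem_palFactors, and_congr_left_iff]
  intro hp
  constructor
  · intro h
    have := List.reverse_infix.2 h
    rwa [hp, List.reverse_reverse] at this
  · intro h
    have : u.reverse <:+: w.reverse := List.reverse_infix.2 h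
    rwa [hp] at this

lemma Rich.reverse {w : List α} (h : Rich w) : Rich w.reverse := by
  unfold Rich at *
  rwa [palFactors_reverse, List.length_reverse]

lemma Rich.infix {w u : List α} (h : Rich w) (hi : u <:+: w) : Rich u := by
  obtain ⟨s, t, rfl⟩ := hi
  have h1 : Rich (u ++ t) := by
    have hp : (u ++ t).reverse <+: (s ++ u ++ t).reverse := by
      rw [List.append_assoc]; simp [List.reverse_append]
    have h2 := (h.reverse.prefix hp).reverse
    rwa [List.reverse_reverse] at h2
  exact h1.prefix (List.prefix_append u t)

lemma Rich.new_pal {w : List α} {a : α} (h : Rich (w ++ [a])) :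
    ∃ u ∈ palFactors (w ++ [a]), u ∉ palFactors w := by
  by_contra hc
  push_neg at hc
  have : (palFactors (w ++ [a])).card ≤ (palFactors w).card := Finset.card_le_card hc
  have h2 := card_palFactors_le w
  unfold Rich at h
  simp only [List.length_append, List.length_singleton] at h
  omega

/-- Unioccurrence: the LPS of a rich word is not a factor of the word minus its
last letter. -/
lemma Rich.lps_new {w s : List α} {a : α} (h : Rich (w ++ [a]))
    (hs : IsLPS (w ++ [a]) s) : s ∉ palFactors w := by
  obtain ⟨hne, hpal, hsuf, hmax⟩ := hs
  obtain ⟨u, hu, hnu⟩ := h.new_pal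
  rw [mem_palFactors] at hu
  have husuf : u <:+ w ++ [a] := new_pal_suffix hu.1 fun hh =>
    hnu (mem_palFactors.2 ⟨hh, hu.2⟩)
  have hle : u.length ≤ s.length := hmax u husuf hu.2
  have hus : u <:+ s := by
    rcases List.suffix_or_suffix_of_suffix husuf hsuf with hh | hh
    · exact hh
    · exact (hh.eq_of_length (le_antisymm hh.length_le hle)).symm ▸ List.suffix_refl s
  have hpus : u <+: s := by
    have hh := hus.reverse
    rwa [hu.2, hpal] at hh
  by_cases heq : u = s
  · exact heq ▸ hnu
  · exact absurd (mem_palFactors.2 ⟨prefix_proper_infix hpus heq hsuf, hu.2⟩) hnu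

variable {α : Type*} [DecidableEq α]

/-- The longest palindromic suffix. -/
def lps (w : List α) : List α :=
  ((w.tails.filter fun t => !t.isEmpty && (t.reverse == t)).argmax List.length).getD []

lemma lps_isLPS {w : List α} (h : w ≠ []) : IsLPS w (lps w) := by
  set l := w.tails.filter fun t => !t.isEmpty && (t.reverse == t) with hl
  have hmem : [w.getLast h] ∈ l := by
    rw [hl, List.mem_filter]
    refine ⟨(List.mem_tails _ _).2 ?_, by simp⟩
    conv_rhs => rw [← List.dropLast_append_getLast h]
    exact ⟨w.dropLast, rfl⟩
  have hne : l ≠ [] := List.ne_nil_of_mem hmem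
  obtain ⟨m, hm⟩ : ∃ m, l.argmax List.length = some m := by
    rcases hh : l.argmax List.length with _ | m
    · exact absurd (List.argmax_eq_none.1 hh) hne
    · exact ⟨m, rfl⟩
  have hlps : lps w = m := by rw [lps, ← hl, hm]; rfl
  have hmmem := List.argmax_mem hm
  rw [hl, List.mem_filter] at hmmem
  obtain ⟨hmt, hmp⟩ := hmmem
  have hmp' : m ≠ [] ∧ m.reverse = m := by simpa using hmp
  rw [hlps]
  refine ⟨hmp'.1, hmp'.2, (List.mem_tails _ _).1 hmt, ?_⟩
  intro t ht hpt
  rcases eq_or_ne t [] with rfl | htne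
  · simp
  · refine List.le_of_mem_argmax ?_ hm
    rw [hl, List.mem_filter]
    exact ⟨(List.mem_tails _ _).2 ht, by simp [htne, hpt]⟩

lemma lps_ne_nil {w : List α} (h : w ≠ []) : lps w ≠ [] := (lps_isLPS h).1

lemma lps_suffix {w : List α} (h : w ≠ []) : lps w <:+ w := (lps_isLPS h).2.2.1

/-- The greedy UPS factorization. -/
def upsFac (w : List α) : List (List α) :=
  if h : w = [] then [] else
    upsFac (w.take (w.length - (lps w).length)) ++ [lps w]
termination_by w.length
decreasing_by
  have h1 : 1 ≤ (lps w).length := List.length_pos_iff.2 (lps_ne_nil h)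
  have h2 : w.length ≥ 1 := List.length_pos_iff.2 h
  simp only [List.length_take]
  omega

lemma upsFac_nil : upsFac ([] : List α) = [] := by rw [upsFac]; simp

lemma upsFac_eq {w : List α} (h : w ≠ []) :
    upsFac w = upsFac (w.take (w.length - (lps w).length)) ++ [lps w] := by
  rw [upsFac]; simp [h]

lemma take_append_lps {w : List α} (h : w ≠ []) :
    w.take (w.length - (lps w).length) ++ lps w = w := by
  obtain ⟨r, hr⟩ := lps_suffix h
  have h2 : w.length - (lps w).length = r.length := by
    have h3 := congrArg List.length hr
    simp only [List.length_append] at h3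
    omega
  rw [h2]
  calc w.take r.length ++ lps w = (r ++ lps w).take r.length ++ lps w := by rw [hr]
    _ = r ++ lps w := by rw [List.take_left]
    _ = w := hr

lemma upsFac_flatten (w : List α) : (upsFac w).flatten = w := by
  by_cases h : w = []
  · subst h; rw [upsFac_nil]; rfl
  · rw [upsFac_eq h, List.flatten_append]
    have ih := upsFac_flatten (w.take (w.length - (lps w).length))
    rw [ih]
    simpa using take_append_lps h
termination_by w.length
decreasing_by
  have h1 : 1 ≤ (lps w).length := List.length_pos_iff.2 (lps_ne_nil h)
  have h2 : w.length ≥ 1 := List.length_pos_iff.2 h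
  simp only [List.length_take]
  omega

lemma upsFac_ne_nil {w : List α} (h : w ≠ []) : upsFac w ≠ [] := by
  rw [upsFac_eq h]; simp

lemma upsFac_isLPS (w : List α) :
    ∀ i : Fin (upsFac w).length,
      IsLPS (((upsFac w).take (i + 1)).flatten) (upsFac w)[i] := by
  by_cases h : w = []
  · subst h; exact fun i => absurd i.2 (by simp [upsFac_nil])
  · rintro ⟨k, hk⟩
    set r := w.take (w.length - (lps w).length) with hr
    have heq : upsFac w = upsFac r ++ [lps w] := upsFac_eq h
    have hlen : (upsFac w).length = (upsFac r).length + 1 := by rw [heq]; simp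
    have hk' : k < (upsFac r).length + 1 := by omega
    simp only [Fin.getElem_fin, heq]
    rcases Nat.lt_succ_iff_lt_or_eq.1 hk' with hlt | heqi
    · have ih := upsFac_isLPS r ⟨k, hlt⟩
      rw [List.take_append_of_le_length (by omega), List.getElem_append_left hlt]
      simpa using ih
    · subst heqi
      rw [List.take_of_length_le (by simp), List.getElem_concat_length,
        ← heq, upsFac_flatten]
      · exact lps_isLPS h
      · rfl
termination_by w.length
decreasing_by
  have h1 : 1 ≤ (lps w).length := List.length_pos_iff.2 (lps_ne_nil h)
  have h2 : w.length ≥ 1 := List.length_pos_iff.2 h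
  simp only [hr, List.length_take]
  omega

lemma flatten_prefix_of_prefix {l₁ l₂ : List (List α)} (h : l₁ <+: l₂) :
    l₁.flatten <+: l₂.flatten := by
  obtain ⟨t, rfl⟩ := h
  exact ⟨t.flatten, List.flatten_append.symm⟩

lemma upsFac_pairwise {w : List α} (h : Rich w) : (upsFac w).Pairwise (· ≠ ·) := by
  rw [List.pairwise_iff_getElem]
  intro i j hi hj hij heq
  set ws := upsFac w with hws
  have hLi : IsLPS ((ws.take (i + 1)).flatten) (ws[i]'hi) := upsFac_isLPS w ⟨i, hi⟩
  have hLj : IsLPS ((ws.take (j + 1)).flatten) (ws[j]'hj) := upsFac_isLPS w ⟨j, hj⟩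
  set P := (ws.take (j + 1)).flatten with hP
  set Q := (ws.take (i + 1)).flatten with hQ
  set D := (ws.take (j + 1)).drop (i + 1) with hD
  have htt : List.take (i+1) (List.take (j+1) ws) = List.take (i+1) ws := by
    rw [List.take_take, min_eq_left (by omega)]
  have hPQ : P = Q ++ D.flatten := by
    conv_lhs => rw [hP, ← List.take_append_drop (i+1) (List.take (j+1) ws)]
    rw [List.flatten_append, htt, ← hQ, ← hD]
  have hjtl : j < (ws.take (j+1)).length := by
    rw [List.length_take]; omega
  have hjD : ws[j] ∈ D := by
    have hlD : j - (i + 1) < D.length := by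
      rw [hD, List.length_drop, List.length_take]; omega
    have h2 := List.getElem_mem hlD
    have h3 : D[j - (i+1)]'hlD = ws[j]'hj := by
      simp only [hD, List.getElem_drop, List.getElem_take]
      simp only [show i + 1 + (j - (i+1)) = j from by omega]
    rwa [h3] at h2
  have hDne : D.flatten ≠ [] := by
    intro hc
    have := (List.sublist_flatten_of_mem hjD).length_le
    rw [hc] at this
    simp only [List.length_nil, Nat.le_zero, List.length_eq_zero_iff] at this
    exact hLj.1 this
  have hPne : P ≠ [] := by
    rw [hPQ]; simp [hDne]
  have hPw : P <+: w := by
    have := flatten_prefix_of_prefix (List.take_prefix (j+1) ws)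
    rwa [hws, upsFac_flatten] at this
  have hRichP : Rich P := h.prefix hPw
  have hPd := List.dropLast_append_getLast hPne
  have hnew : ws[j] ∉ palFactors P.dropLast := by
    apply Rich.lps_new (a := P.getLast hPne) <;> rw [hPd]
    · exact hRichP
    · exact hLj
  apply hnew
  rw [mem_palFactors]
  refine ⟨?_, heq ▸ hLi.2.1⟩
  have hQd : Q <+: P.dropLast := by
    rw [hPQ, List.dropLast_append_of_ne_nil hDne]
    exact ⟨D.flatten.dropLast, rfl⟩
  exact heq ▸ (hLi.2.2.1.isInfix.trans hQd.isInfix)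

lemma upsFac_UPS {w : List α} (hw : w ≠ []) (h : Rich w) : UPS w (upsFac w) :=
  ⟨upsFac_ne_nil hw, upsFac_flatten w, upsFac_pairwise h, upsFac_isLPS w⟩

/-- Reconstruct a palindrome of length `m` from its first `⌈m/2⌉` letters. -/
def halfRecon (t : List α) (m : ℕ) : List α :=
  t ++ (t.take (m - (m + 1) / 2)).reverse

lemma pal_halfRecon {s : List α} (hs : s.reverse = s) :
    halfRecon (s.take ((s.length + 1) / 2)) s.length = s := by
  set m := s.length with hm
  set h := (m + 1) / 2 with hh
  have hle : m - h ≤ h := by omega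
  rw [halfRecon, List.take_take, min_eq_left hle]
  have h2 : (s.drop h).reverse = s.take (m - h) := by
    rw [List.reverse_drop, hs, ← hm]
  calc s.take h ++ (s.take (m - h)).reverse
      = s.take h ++ s.drop h := by rw [← h2, List.reverse_reverse]
    _ = s := List.take_append_drop h s

lemma upsFac_block_pal (w : List α) (i : Fin (upsFac w).length) :
    (upsFac w)[i] ≠ [] ∧ (upsFac w)[i].reverse = (upsFac w)[i] ∧
      (upsFac w)[i] <:+: w := by
  have h := upsFac_isLPS w i
  refine ⟨h.1, h.2.1, ?_⟩
  have h1 : (upsFac w)[i] <:+ ((upsFac w).take (i + 1)).flatten := h.2.2.1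
  have h2 : ((upsFac w).take (i + 1)).flatten <+: w := by
    have := flatten_prefix_of_prefix (List.take_prefix (i + 1) (upsFac w))
    rwa [upsFac_flatten] at this
  exact h1.isInfix.trans h2.isInfix

lemma upsFac_sum_lengths (w : List α) :
    ∑ i : Fin (upsFac w).length, (upsFac w)[i].length = w.length := by
  conv_rhs => rw [← upsFac_flatten w]
  rw [List.length_flatten]
  conv_rhs => rw [← List.ofFn_getElem (xs := upsFac w)]
  rw [List.map_ofFn, List.sum_ofFn]
  rfl

lemma upsFac_block_len_le (w : List α) (i : Fin (upsFac w).length) :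
    (upsFac w)[i].length ≤ w.length := by
  obtain ⟨-, -, hinf⟩ := upsFac_block_pal w i
  exact hinf.length_le

end AuxUPS

/-- Target type for the injection. -/
abbrev Tgt (q τn n : ℕ) : Type :=
  Σ p : {p : ℕ // p ∈ Finset.Icc 1 τn},
    Σ f : {f : Fin p.1 → Fin (n + 1) // f ∈ comps n p.1},
      ∀ i : Fin p.1,
        {v : List.Vector (Fin q) (((f.1 i : ℕ) + 1) / 2) // Rich v.toList}

def decode {q τn n : ℕ} (x : Tgt q τn n) : List (Fin q) :=
  (List.ofFn fun i : Fin x.1.1 =>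
    halfRecon ((x.2.2 i).1.toList) (x.2.1.1 i : ℕ)).flatten

def encode {q : ℕ} (τ : ℕ → ℕ) (n : ℕ)
    (hτ : ∀ (w : List (Fin q)) (ws : List (List (Fin q))),
      w ≠ [] → Rich w → UPS w ws → ws.length ≤ τ w.length)
    (hn : 1 ≤ n) (w : {w : List.Vector (Fin q) n // Rich w.toList}) :
    Tgt q (τ n) n :=
  ⟨⟨(upsFac w.1.toList).length, by
      have hL : w.1.toList.length = n := w.1.2
      have hLne : w.1.toList ≠ [] := by
        intro hc; rw [hc] at hL; simp at hL; omega
      rw [Finset.mem_Icc]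
      refine ⟨List.length_pos_iff.2 (upsFac_ne_nil hLne), ?_⟩
      have := hτ w.1.toList (upsFac w.1.toList) hLne w.2 (upsFac_UPS hLne w.2)
      rwa [hL] at this⟩,
   ⟨⟨fun i => ⟨(upsFac w.1.toList)[i].length, by
        have h1 := upsFac_block_len_le w.1.toList i
        have hL : w.1.toList.length = n := w.1.2
        omega⟩, by
      rw [comps, Finset.mem_filter]
      refine ⟨Finset.mem_univ _, fun i => ?_, ?_⟩
      · exact List.length_pos_iff.2 (upsFac_block_pal w.1.toList i).1
      · have h5 := upsFac_sum_lengths w.1.toList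
        have hL : w.1.toList.length = n := w.1.2
        show ∑ i : Fin (upsFac w.1.toList).length, (upsFac w.1.toList)[i].length = n
        rw [h5, hL]⟩,
    fun i => ⟨⟨(upsFac w.1.toList)[i].take (((upsFac w.1.toList)[i].length + 1) / 2), by
        have h1 : 1 ≤ (upsFac w.1.toList)[i].length :=
          List.length_pos_iff.2 (upsFac_block_pal w.1.toList i).1
        rw [List.length_take]
        exact min_eq_left (by omega)⟩, by
      exact w.2.infix ((List.take_prefix _ _).isInfix.trans
        (upsFac_block_pal w.1.toList i).2.2)⟩⟩⟩

lemma decode_encode {q : ℕ} (τ : ℕ → ℕ) (n : ℕ)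
    (hτ : ∀ (w : List (Fin q)) (ws : List (List (Fin q))),
      w ≠ [] → Rich w → UPS w ws → ws.length ≤ τ w.length)
    (hn : 1 ≤ n) (w : {w : List.Vector (Fin q) n // Rich w.toList}) :
    decode (encode τ n hτ hn w) = w.1.toList := by
  show (List.ofFn fun i : Fin (upsFac w.1.toList).length =>
      halfRecon ((upsFac w.1.toList)[i].take (((upsFac w.1.toList)[i].length + 1) / 2))
        ((upsFac w.1.toList)[i].length)).flatten = w.1.toList
  have hfun : (fun i : Fin (upsFac w.1.toList).length =>
      halfRecon ((upsFac w.1.toList)[i].take (((upsFac w.1.toList)[i].length + 1) / 2))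
        ((upsFac w.1.toList)[i].length)) =
      fun i : Fin (upsFac w.1.toList).length => (upsFac w.1.toList)[(i : ℕ)] := by
    funext i
    exact pal_halfRecon (upsFac_block_pal w.1.toList i).2.1
  rw [hfun, List.ofFn_getElem, upsFac_flatten]

/-- if `τ` bounds the UPS-factorization length of rich words, then
`R(n) ≤ ∑_{p=1}^{τ(n)} ∑_{n₁+⋯+n_p=n} R(⌈n₁/2⌉)⋯R(⌈n_p/2⌉)` (for naturals,
`⌈m/2⌉ = (m+1)/2`). -/
theorem stmt_15 (q : ℕ) (hq : 2 ≤ q) (τ : ℕ → ℕ)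
    (hτ : ∀ (w : List (Fin q)) (ws : List (List (Fin q))),
      w ≠ [] → Rich w → UPS w ws → ws.length ≤ τ w.length)
    (n : ℕ) (hn : 2 ≤ n) :
    richCount q n ≤ ∑ p ∈ Finset.Icc 1 (τ n), ∑ f ∈ comps n p,
      ∏ i, richCount q (((f i : ℕ) + 1) / 2) := by
  have hn1 : 1 ≤ n := by omega
  have hinj : Function.Injective (encode τ n hτ hn1) := by
    intro a b hab
    have h1 := decode_encode τ n hτ hn1 a
    have h2 := decode_encode τ n hτ hn1 b
    rw [hab] at h1
    exact Subtype.ext (List.Vector.toList_injective (h1.symm.trans h2))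
  have hle : richCount q n ≤ Fintype.card (Tgt q (τ n) n) :=
    Fintype.card_le_of_injective _ hinj
  refine hle.trans (le_of_eq ?_)
  rw [Fintype.card_sigma,
    ← Finset.sum_coe_sort (Finset.Icc 1 (τ n))
      (fun p => ∑ f ∈ comps n p, ∏ i, richCount q (((f i : ℕ) + 1) / 2))]
  refine Finset.sum_congr rfl fun p _ => ?_
  rw [Fintype.card_sigma,
    ← Finset.sum_coe_sort (comps n (p : ℕ))
      (fun f => ∏ i, richCount q (((f i : ℕ) + 1) / 2))]
  refine Finset.sum_congr rfl fun f _ => ?_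
  rw [Fintype.card_pi]
  rfl
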